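/- Let m ≥ 1 and define, for unit vectors u, v ∈ ℂ^m, the chordal distance d(u, v) = √(1 − |uᴴv|²). Then for all unit vectors u, v, w ∈ ℂ^m: |d(u, v) − d(v, w)| ≤ d(u, w). -/

import Mathlib

lemma real_key (a b c s t : ℝ) (ha : 0 ≤ a) (hb : 0 ≤ b) (hs : 0 ≤ s) (ht : 0 ≤ t)
    (h1 : a ^ 2 + s ^ 2 = 1) (h2 : b ^ 2 + t ^ 2 = 1) (hc : 0 ≤ c)
    (hge : a * b - s * t ≤ c) : Real.sqrt (1 - c ^ 2) ≤ s + t := by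
  have ha1 : a ≤ 1 := by nlinarith
  have hb1 : b ≤ 1 := by nlinarith
  have key : 1 - c ^ 2 ≤ (s + t) ^ 2 := by
    rcases le_or_gt (a * b - s * t) 0 with h | h
    · nlinarith [sq_nonneg (a - b), sq_nonneg c]
    · have hcsq : (a * b - s * t) ^ 2 ≤ c ^ 2 := by nlinarith
      have hmul : (a ^ 2 + s ^ 2) * (b ^ 2 + t ^ 2) = 1 := by rw [h1, h2]; ring
      have hid : 1 - (a * b - s * t) ^ 2 = (a * t + s * b) ^ 2 := by
        linear_combination -hmul
      have h3 : a * t + s * b ≤ s + t := by nlinarith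
      have h4 : (a * t + s * b) ^ 2 ≤ (s + t) ^ 2 := by
        apply pow_le_pow_left₀ (by positivity) h3
      linarith
  calc Real.sqrt (1 - c ^ 2) ≤ Real.sqrt ((s + t) ^ 2) := Real.sqrt_le_sqrt key
    _ = s + t := Real.sqrt_sq (by linarith)

open scoped InnerProductSpace in
lemma key_inner {E : Type*} [NormedAddCommGroup E] [InnerProductSpace ℂ E] (u v w : E)
    (hu : ‖u‖ = 1) (hv : ‖v‖ = 1) (hw : ‖w‖ = 1) :
    ‖⟪u,w⟫_ℂ - ⟪u,v⟫_ℂ * ⟪v,w⟫_ℂ‖ ≤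
      Real.sqrt (1 - ‖⟪u,v⟫_ℂ‖ ^ 2) * Real.sqrt (1 - ‖⟪v,w⟫_ℂ‖ ^ 2) := by
  set u' := u - ⟪v,u⟫_ℂ • v with hu'
  set w' := w - ⟪v,w⟫_ℂ • v with hw'
  have hvv : (⟪v,v⟫_ℂ) = 1 := by
    rw [inner_self_eq_norm_sq_to_K, hv]; norm_num
  have hinner : (⟪u',w'⟫_ℂ) = ⟪u,w⟫_ℂ - ⟪u,v⟫_ℂ * ⟪v,w⟫_ℂ := by
    simp [hu', hw', inner_sub_left, inner_sub_right, inner_smul_left, inner_smul_right,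
      hvv, inner_conj_symm]
    rw [hv, Complex.ofReal_one]; ring
  have normsq : ∀ x : E, ‖x‖ = 1 → ‖x - ⟪v,x⟫_ℂ • v‖ = Real.sqrt (1 - ‖⟪x,v⟫_ℂ‖ ^ 2) := by
    intro x hx
    have h2 : ‖x - ⟪v,x⟫_ℂ • v‖ ^ 2 = 1 - ‖⟪x,v⟫_ℂ‖ ^ 2 := by
      rw [@norm_sub_sq ℂ]
      rw [inner_smul_right, norm_smul, hv, hx]
      have : (⟪v,x⟫_ℂ) * ⟪x,v⟫_ℂ = (‖⟪v,x⟫_ℂ‖ : ℂ) ^ 2 := by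
        rw [← inner_conj_symm x v, Complex.mul_conj']
      rw [this]
      rw [← norm_inner_symm x v, ← Complex.ofReal_pow]
      simp only [RCLike.re_to_complex, Complex.ofReal_re]
      ring
    rw [← h2, Real.sqrt_sq (norm_nonneg _)]
  calc ‖⟪u,w⟫_ℂ - ⟪u,v⟫_ℂ * ⟪v,w⟫_ℂ‖ = ‖⟪u',w'⟫_ℂ‖ := by rw [hinner]
    _ ≤ ‖u'‖ * ‖w'‖ := norm_inner_le_norm _ _
    _ = _ := by
        rw [hu', hw', normsq u hu, normsq w hw, norm_inner_symm u v, norm_inner_symm w v]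

open scoped InnerProductSpace in
lemma tri_inner {E : Type*} [NormedAddCommGroup E] [InnerProductSpace ℂ E] (u v w : E)
    (hu : ‖u‖ = 1) (hv : ‖v‖ = 1) (hw : ‖w‖ = 1) :
    Real.sqrt (1 - ‖⟪u,w⟫_ℂ‖ ^ 2) ≤
      Real.sqrt (1 - ‖⟪u,v⟫_ℂ‖ ^ 2) + Real.sqrt (1 - ‖⟪v,w⟫_ℂ‖ ^ 2) := by
  have ha1 : ‖⟪u,v⟫_ℂ‖ ≤ 1 := by
    have := norm_inner_le_norm (𝕜 := ℂ) u v; rw [hu, hv] at this; simpa using this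
  have hb1 : ‖⟪v,w⟫_ℂ‖ ≤ 1 := by
    have := norm_inner_le_norm (𝕜 := ℂ) v w; rw [hv, hw] at this; simpa using this
  have h1 : ‖⟪u,v⟫_ℂ‖ ^ 2 + Real.sqrt (1 - ‖⟪u,v⟫_ℂ‖ ^ 2) ^ 2 = 1 := by
    rw [Real.sq_sqrt (by nlinarith [norm_nonneg (⟪u,v⟫_ℂ)])]; ring
  have h2 : ‖⟪v,w⟫_ℂ‖ ^ 2 + Real.sqrt (1 - ‖⟪v,w⟫_ℂ‖ ^ 2) ^ 2 = 1 := by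
    rw [Real.sq_sqrt (by nlinarith [norm_nonneg (⟪v,w⟫_ℂ)])]; ring
  have hge : ‖⟪u,v⟫_ℂ‖ * ‖⟪v,w⟫_ℂ‖ -
      Real.sqrt (1 - ‖⟪u,v⟫_ℂ‖ ^ 2) * Real.sqrt (1 - ‖⟪v,w⟫_ℂ‖ ^ 2) ≤ ‖⟪u,w⟫_ℂ‖ := by
    have hk := key_inner u v w hu hv hw
    have h5 : ‖⟪u,v⟫_ℂ * ⟪v,w⟫_ℂ‖ - ‖⟪u,w⟫_ℂ‖ ≤ ‖⟪u,w⟫_ℂ - ⟪u,v⟫_ℂ * ⟪v,w⟫_ℂ‖ := by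
      have := norm_sub_norm_le (⟪u,v⟫_ℂ * ⟪v,w⟫_ℂ) (⟪u,w⟫_ℂ)
      rw [norm_sub_rev] at this; exact this
    rw [norm_mul] at h5
    linarith
  exact real_key _ _ _ _ _ (norm_nonneg _) (norm_nonneg _) (Real.sqrt_nonneg _)
    (Real.sqrt_nonneg _) h1 h2 (norm_nonneg _) hge

/-- Euclidean norm of a complex vector. -/
noncomputable def cnorm {k : ℕ} (v : Fin k → ℂ) : ℝ :=
  Real.sqrt (∑ i, ‖v i‖ ^ 2)

/-- Chordal distance between complex vectors: `d(u,v) = √(1 − |uᴴv|²)`. -/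
noncomputable def cdist {k : ℕ} (u v : Fin k → ℂ) : ℝ :=
  Real.sqrt (1 - ‖dotProduct (star u) v‖ ^ 2)

open scoped InnerProductSpace in
lemma cdist_eq {k : ℕ} (u v : Fin k → ℂ) :
    cdist u v = Real.sqrt (1 - ‖⟪((WithLp.equiv 2 (Fin k → ℂ)).symm u : EuclideanSpace ℂ (Fin k)),
      (WithLp.equiv 2 (Fin k → ℂ)).symm v⟫_ℂ‖ ^ 2) := by
  unfold cdist
  have : dotProduct (star u) v =
      ⟪((WithLp.equiv 2 (Fin k → ℂ)).symm u : EuclideanSpace ℂ (Fin k)),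
      (WithLp.equiv 2 (Fin k → ℂ)).symm v⟫_ℂ := by
    simp [dotProduct, PiLp.inner_apply, RCLike.inner_apply, mul_comm]
  rw [this]

lemma cnorm_eq {k : ℕ} (u : Fin k → ℂ) :
    cnorm u = ‖((WithLp.equiv 2 (Fin k → ℂ)).symm u : EuclideanSpace ℂ (Fin k))‖ := by
  rw [EuclideanSpace.norm_eq]
  rfl

lemma cdist_symm {k : ℕ} (u v : Fin k → ℂ) : cdist u v = cdist v u := by
  unfold cdist
  congr 3
  rw [show dotProduct (star u) v = star (dotProduct (star v) u) by
    simp [dotProduct, star_sum, mul_comm], norm_star]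

/-- Triangle-type inequality for the chordal distance between unit vectors:
`|d(u,v) − d(v,w)| ≤ d(u,w)`. -/
theorem stmt11 (m : ℕ) (hm : 1 ≤ m) (u v w : Fin m → ℂ)
    (hu : cnorm u = 1) (hv : cnorm v = 1) (hw : cnorm w = 1) :
    |cdist u v - cdist v w| ≤ cdist u w := by
  rw [cnorm_eq] at hu hv hw
  rw [abs_sub_le_iff]
  constructor
  · have t1 := tri_inner _ _ _ hu hw hv
    have e := cdist_symm v w
    rw [cdist_eq u v, cdist_eq v w, cdist_eq u w, cdist_eq w v] at *
    linarith [t1, e]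
  · have t1 := tri_inner _ _ _ hv hu hw
    have e := cdist_symm u v
    rw [cdist_eq u v, cdist_eq v w, cdist_eq u w, cdist_eq v u] at *
    linarith [t1, e]
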